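/- Every rational number is realized as a generalized winding number: for each α ∈ ℚ there exists a continuous ℚ-periodic function g : 𝔸 → S¹ whose generalized winding number equals α, i.e. some (equivalently, any) lift f̃ of the pre-periodic function t ↦ g(t, 0) satisfies (f̃(x) − f̃(−x))/(2x) → α as x → +∞. -/

import Mathlib

open Filter IsDedekindDomain

noncomputable section

/-- The finite adele ring `𝔸_f` of `ℚ`: the restricted product of the fields `ℚ_p` with
respect to the subrings `ℤ_p`, with the restricted product topology. -/
abbrev FiniteAdeles : Type := FiniteAdeleRing ℤ ℚ

/-- The adele ring `𝔸 = ℝ × 𝔸_f` of `ℚ`. -/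
abbrev AdeleRingQ : Type := ℝ × FiniteAdeles

/-- The diagonal embedding `ι : ℚ → 𝔸`, `q ↦ (q, (q)_p)`. -/
def diag (q : ℚ) : AdeleRingQ := ((q : ℝ), algebraMap ℚ FiniteAdeles q)

/-- A function on the adele ring is `ℚ`-periodic if it is invariant under translation by
every diagonally embedded rational. -/
def QPeriodic {β : Type*} (g : AdeleRingQ → β) : Prop :=
  ∀ (x : AdeleRingQ) (α : ℚ), g (x + diag α) = g x

/-- A continuous function `f : ℝ → ℂ` taking values in the unit circle `S¹` is *pre-periodic*
if for every `ε > 0` there is a positive integer `N` such that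
`|f (x + k * N) - f x| < ε` for all integers `k` and all real `x`. -/
def PrePeriodic (f : ℝ → ℂ) : Prop :=
  Continuous f ∧ (∀ x : ℝ, ‖f x‖ = 1) ∧
    ∀ ε : ℝ, 0 < ε → ∃ N : ℕ, 0 < N ∧
      ∀ (k : ℤ) (x : ℝ), ‖f (x + (k : ℝ) * (N : ℝ)) - f x‖ < ε

/-- `F : ℝ → ℝ` is a lift of `f : ℝ → S¹ ⊆ ℂ` if `F` is continuous and
`f x = e^{2 π i F x}` for all `x`. -/
def IsLift (f : ℝ → ℂ) (F : ℝ → ℝ) : Prop :=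
  Continuous F ∧ ∀ x : ℝ, f x = Complex.exp (2 * Real.pi * Complex.I * (F x : ℂ))


open IsDedekindDomain in
/-- A rational whose `v`-adic valuation is at most one for every finite place is an integer. -/
lemma rat_int_of_val (q : ℚ) (h : ∀ v : HeightOneSpectrum ℤ, v.valuation ℚ (q : ℚ) ≤ 1) :
    ∃ n : ℤ, (n : ℚ) = q := by
  by_cases hd : q.den = 1
  · exact ⟨q.num, by rw [← q.num_div_den, hd]; simp⟩
  · exfalso
    obtain ⟨p, hp, hpd⟩ := Nat.exists_prime_and_dvd hd
    have hpZ : Prime (p : ℤ) := Int.prime_iff_natAbs_prime.mpr (by simpa using hp)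
    set v : HeightOneSpectrum ℤ :=
      ⟨Ideal.span {(p : ℤ)}, (Ideal.span_singleton_prime hpZ.ne_zero).mpr hpZ,
        by simpa [Ideal.span_singleton_eq_bot] using hpZ.ne_zero⟩ with hv
    have hnum : ((q.num : ℤ) : ℚ) = q * ((q.den : ℤ) : ℚ) := by
      push_cast
      exact_mod_cast (Rat.mul_den_eq_num q).symm
    have hvden : v.valuation ℚ ((q.den : ℤ) : ℚ) < 1 := by
      have h0 : algebraMap ℤ ℚ (q.den : ℤ) = ((q.den : ℤ) : ℚ) := rfl
      rw [← h0, HeightOneSpectrum.valuation_lt_one_iff_dvd]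
      rw [hv, Ideal.dvd_span_singleton, Ideal.mem_span_singleton]
      exact_mod_cast hpd
    have hvnum : v.valuation ℚ ((q.num : ℤ) : ℚ) = 1 := by
      have hle : v.valuation ℚ (algebraMap ℤ ℚ q.num) ≤ 1 := v.valuation_le_one q.num
      refine le_antisymm hle ?_
      by_contra hlt
      push_neg at hlt
      have hlt' : v.valuation ℚ (algebraMap ℤ ℚ q.num) < 1 := hlt
      rw [HeightOneSpectrum.valuation_lt_one_iff_dvd, hv, Ideal.dvd_span_singleton,
        Ideal.mem_span_singleton] at hlt'
      have hpn : p ∣ q.num.natAbs := Int.natCast_dvd_natCast.mp (Int.dvd_natAbs.mpr hlt')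
      have hg : p ∣ Nat.gcd q.num.natAbs q.den := Nat.dvd_gcd hpn hpd
      rw [q.reduced] at hg
      exact hp.one_lt.ne' (Nat.dvd_one.mp hg)
    have hmul : v.valuation ℚ ((q.num : ℤ) : ℚ) = v.valuation ℚ q * v.valuation ℚ ((q.den : ℤ) : ℚ) := by
      rw [hnum, map_mul]
    have hlt1 : v.valuation ℚ ((q.num : ℤ) : ℚ) < 1 := by
      rw [hmul]
      calc v.valuation ℚ q * v.valuation ℚ ((q.den:ℤ):ℚ) ≤ 1 * v.valuation ℚ ((q.den:ℤ):ℚ) :=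
            mul_le_mul_left (h v) _
        _ = v.valuation ℚ ((q.den:ℤ):ℚ) := one_mul _
        _ < 1 := hvden
    rw [hvnum] at hlt1
    exact lt_irrefl 1 hlt1

/-- The subgroup `∏_p ℤ_p` of the finite adeles. -/
def Vsub : AddSubgroup FiniteAdeles where
  carrier := {x | ∀ v : HeightOneSpectrum ℤ, x v ∈ v.adicCompletionIntegers ℚ}
  add_mem' := fun ha hb v => add_mem (ha v) (hb v)
  zero_mem' := fun v => zero_mem _
  neg_mem' := fun ha v => neg_mem (ha v)

lemma Vsub_isOpen : IsOpen (Vsub : Set FiniteAdeles) := by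
  exact RestrictedProduct.isOpen_forall_mem (fun v => Valued.isOpen_valuationSubring _)

open IsDedekindDomain in
lemma int_of_mem_V (q : ℚ) (h : algebraMap ℚ FiniteAdeles q ∈ Vsub) :
    ∃ n : ℤ, (n : ℚ) = q := by
  refine rat_int_of_val q (fun v => ?_)
  have h2 : (algebraMap ℚ FiniteAdeles q) v ∈ v.adicCompletionIntegers ℚ := h v
  rw [HeightOneSpectrum.mem_adicCompletionIntegers, FiniteAdeleRing.algebraMap_apply,
    HeightOneSpectrum.valuedAdicCompletion_eq_valuation'] at h2
  exact h2

/-- The subgroup `ℚ + ∏_p ℤ_p` of the finite adeles. -/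
def Wsub : AddSubgroup FiniteAdeles :=
  Vsub ⊔ (algebraMap ℚ FiniteAdeles).toAddMonoidHom.range

lemma exists_rr (y : FiniteAdeles) :
    ∃ q : ℚ, y - (QuotientAddGroup.mk (s := Wsub) y).out - algebraMap ℚ FiniteAdeles q ∈ Vsub := by
  have hy : y - (QuotientAddGroup.mk (s := Wsub) y).out ∈ Wsub := by
    rw [← QuotientAddGroup.eq_iff_sub_mem]
    exact ((QuotientAddGroup.mk (s := Wsub) y).out_eq').symm
  generalize (QuotientAddGroup.mk (s := Wsub) y).out = c at hy ⊢
  rw [Wsub, AddSubgroup.mem_sup] at hy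
  obtain ⟨a, ha, b, ⟨q, rfl⟩, hab⟩ := hy
  simp only [RingHom.toAddMonoidHom_eq_coe, AddMonoidHom.coe_coe] at hab
  refine ⟨q, ?_⟩
  have heq : y - c - algebraMap ℚ FiniteAdeles q = a := by
    linear_combination -hab
  rwa [heq]

/-- A choice of "rational part" of a finite adele, modulo `ℤ`. -/
def rr (y : FiniteAdeles) : ℚ := (exists_rr y).choose

lemma rr_spec (y : FiniteAdeles) :
    y - (QuotientAddGroup.mk (s := Wsub) y).out - algebraMap ℚ FiniteAdeles (rr y) ∈ Vsub :=
  (exists_rr y).choose_spec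

lemma rr_sub_int {y y' : FiniteAdeles} (h : y' - y ∈ Vsub) :
    ∃ n : ℤ, rr y' = rr y + n := by
  have hmk : (QuotientAddGroup.mk (s := Wsub) y') = QuotientAddGroup.mk (s := Wsub) y := by
    rw [QuotientAddGroup.eq_iff_sub_mem]
    exact le_sup_left (a := Vsub) h
  have h1 := rr_spec y'
  rw [hmk] at h1
  have h2 := rr_spec y
  have h3 : algebraMap ℚ FiniteAdeles (rr y - rr y') ∈ Vsub := by
    have h4 := Vsub.sub_mem (Vsub.sub_mem h1 h2) h
    have heq : y' - (QuotientAddGroup.mk (s := Wsub) y).out - algebraMap ℚ FiniteAdeles (rr y') -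
        (y - (QuotientAddGroup.mk (s := Wsub) y).out - algebraMap ℚ FiniteAdeles (rr y)) -
        (y' - y) = algebraMap ℚ FiniteAdeles (rr y - rr y') := by
      rw [map_sub]; ring
    rwa [heq] at h4
  obtain ⟨n, hn⟩ := int_of_mem_V _ h3
  exact ⟨-n, by push_cast; linarith [hn]⟩

lemma rr_add_rat (y : FiniteAdeles) (q : ℚ) :
    ∃ n : ℤ, rr (y + algebraMap ℚ FiniteAdeles q) = rr y + q + n := by
  have hmk : (QuotientAddGroup.mk (s := Wsub) (y + algebraMap ℚ FiniteAdeles q))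
      = QuotientAddGroup.mk (s := Wsub) y := by
    rw [QuotientAddGroup.eq_iff_sub_mem]
    have heq : y + algebraMap ℚ FiniteAdeles q - y = algebraMap ℚ FiniteAdeles q := by ring
    rw [heq]
    exact le_sup_right (a := Vsub) ⟨q, rfl⟩
  have h1 := rr_spec (y + algebraMap ℚ FiniteAdeles q)
  rw [hmk] at h1
  have h2 := rr_spec y
  have h3 : algebraMap ℚ FiniteAdeles (q + rr y - rr (y + algebraMap ℚ FiniteAdeles q)) ∈ Vsub := by
    have h4 := Vsub.sub_mem h1 h2
    have heq : y + algebraMap ℚ FiniteAdeles q - (QuotientAddGroup.mk (s := Wsub) y).out -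
        algebraMap ℚ FiniteAdeles (rr (y + algebraMap ℚ FiniteAdeles q)) -
        (y - (QuotientAddGroup.mk (s := Wsub) y).out - algebraMap ℚ FiniteAdeles (rr y)) =
        algebraMap ℚ FiniteAdeles (q + rr y - rr (y + algebraMap ℚ FiniteAdeles q)) := by
      rw [map_sub, map_add]; ring
    rwa [heq] at h4
  obtain ⟨n, hn⟩ := int_of_mem_V _ h3
  exact ⟨-n, by push_cast; linarith [hn]⟩

/-- The character-like function `χ(y) = e^{-2πi·rr(y)}` on the finite adeles. -/
def chi (y : FiniteAdeles) : ℂ :=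
  Complex.exp (2 * Real.pi * Complex.I * (-(rr y : ℝ) : ℂ))

lemma exp_two_pi_int (n : ℤ) : Complex.exp (2 * Real.pi * Complex.I * (n : ℂ)) = 1 := by
  have h := Complex.exp_int_mul_two_pi_mul_I n
  rw [← h]; ring_nf

lemma chi_norm (y : FiniteAdeles) : ‖chi y‖ = 1 := by
  have h : (2 * (Real.pi : ℂ) * Complex.I * (-(rr y : ℝ) : ℂ))
      = ((-(2 * Real.pi * (rr y : ℝ)) : ℝ) : ℂ) * Complex.I := by push_cast; ring
  rw [chi, h, Complex.norm_exp_ofReal_mul_I]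

lemma chi_add_rat (y : FiniteAdeles) (q : ℚ) :
    chi (y + algebraMap ℚ FiniteAdeles q)
      = Complex.exp (2 * Real.pi * Complex.I * (-(q : ℝ) : ℂ)) * chi y := by
  obtain ⟨n, hn⟩ := rr_add_rat y q
  rw [chi, chi, hn, ← Complex.exp_add]
  have h1 : 2 * (Real.pi:ℂ) * Complex.I * (-((((rr y + q + n : ℚ)) : ℝ) : ℂ))
      = (2 * (Real.pi:ℂ) * Complex.I * (-(q:ℝ)) + 2 * (Real.pi:ℂ) * Complex.I * (-(rr y : ℝ)))
        + 2 * (Real.pi:ℂ) * Complex.I * ((-n : ℤ) : ℂ) := by push_cast; ring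
  rw [h1, Complex.exp_add, exp_two_pi_int (-n), mul_one]

lemma chi_eq_of_sub_mem {y y' : FiniteAdeles} (h : y' - y ∈ Vsub) : chi y' = chi y := by
  obtain ⟨n, hn⟩ := rr_sub_int h
  rw [chi, chi, hn]
  have h1 : 2 * (Real.pi:ℂ) * Complex.I * (-(((rr y + n : ℚ) : ℝ) : ℂ))
      = 2 * (Real.pi:ℂ) * Complex.I * (-(rr y : ℝ))
        + 2 * (Real.pi:ℂ) * Complex.I * ((-n : ℤ) : ℂ) := by
    push_cast; ring
  rw [h1, Complex.exp_add, exp_two_pi_int (-n), mul_one]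

lemma chi_continuous : Continuous chi := by
  rw [continuous_iff_continuousAt]
  intro y
  have hU : {z : FiniteAdeles | z - y ∈ Vsub} ∈ nhds y := by
    have hop : IsOpen {z : FiniteAdeles | z - y ∈ Vsub} :=
      Vsub_isOpen.preimage (continuous_id.sub continuous_const)
    exact hop.mem_nhds (by simpa using Vsub.zero_mem)
  have hev : chi =ᶠ[nhds y] fun _ => chi y :=
    Filter.eventually_of_mem hU (fun z hz => chi_eq_of_sub_mem hz)
  exact (continuousAt_const).congr hev.symm


/-- Every rational number is realized as the generalized winding number of some continuous
`ℚ`-periodic function `g : 𝔸 → S¹`. -/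
theorem qperiodic_winding_number_surjective (α : ℚ) :
    ∃ g : AdeleRingQ → ℂ, Continuous g ∧ (∀ x : AdeleRingQ, ‖g x‖ = 1) ∧ QPeriodic g ∧
      ∃ F : ℝ → ℝ, IsLift (fun t : ℝ => g (t, (0 : FiniteAdeles))) F ∧
        Tendsto (fun x : ℝ => (F x - F (-x)) / (2 * x)) atTop (nhds (α : ℝ)) := by
  refine ⟨fun x => Complex.exp (2 * Real.pi * Complex.I * ((α : ℝ) * x.1 : ℝ)) *
      chi (algebraMap ℚ FiniteAdeles α * x.2), ?_, ?_, ?_, ?_⟩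
  · apply Continuous.mul
    · apply Complex.continuous_exp.comp
      exact continuous_const.mul
        (Complex.continuous_ofReal.comp (continuous_const.mul continuous_fst))
    · exact chi_continuous.comp (continuous_const.mul continuous_snd)
  · intro x
    rw [norm_mul, chi_norm, mul_one]
    have h : (2 * (Real.pi:ℂ) * Complex.I * (((α:ℝ) * x.1 : ℝ) : ℂ))
        = (((2 * Real.pi * ((α:ℝ) * x.1)) : ℝ) : ℂ) * Complex.I := by push_cast; ring
    rw [h, Complex.norm_exp_ofReal_mul_I]
  · intro x β
    have h2 : (x + diag β).2 = x.2 + algebraMap ℚ FiniteAdeles β := rfl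
    have h1 : (x + diag β).1 = x.1 + (β : ℝ) := rfl
    simp only [h1, h2]
    rw [show (algebraMap ℚ FiniteAdeles) α * (x.2 + algebraMap ℚ FiniteAdeles β)
        = (algebraMap ℚ FiniteAdeles α * x.2) + algebraMap ℚ FiniteAdeles (α * β) by
      rw [map_mul]; ring]
    rw [chi_add_rat, ← mul_assoc]
    congr 1
    rw [← Complex.exp_add]
    congr 1
    push_cast
    ring
  · refine ⟨fun t => (α : ℝ) * t - (rr 0 : ℝ), ⟨(continuous_const.mul continuous_id).sub
      continuous_const, fun t => ?_⟩, ?_⟩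
    · simp only [mul_zero]
      rw [chi, ← Complex.exp_add]
      congr 1
      push_cast
      ring
    · have hev : (fun x : ℝ => ((α : ℝ) * x - (rr 0 : ℝ) - ((α : ℝ) * (-x) - (rr 0 : ℝ))) / (2 * x))
          =ᶠ[atTop] fun _ => (α : ℝ) := by
        filter_upwards [eventually_gt_atTop (0 : ℝ)] with x hx
        field_simp
        ring
      exact Tendsto.congr' hev.symm tendsto_const_nhds
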